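/- Let V be a finite set, let μ be a fully supported probability measure on Ω = {−1,+1}^V, and let c : V × Ω → (0,∞) be flipping rates satisfying the reversibility condition c(x,σ) μ(σ) = c(x,σˣ) μ(σˣ) for all x, σ. Then for every strictly positive function g : Ω → (0,∞), the entropy dissipation inequality E_μ[(𝓛g) · log g] ≤ −D(√g) holds; consequently, for every strictly positive F the function t ↦ Ent_μ(P_t F) is differentiable with d/dt Ent_μ(P_t F) ≤ −D(√(P_t F)) for all t ≥ 0. -/

import Mathlib

open Finset

/-- Flip the spin of `σ` at site `x`. -/
def flipC {V : Type*} [DecidableEq V] (σ : V → Bool) (x : V) : V → Bool :=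
  Function.update σ x (!σ x)

/-- The ±1 spin value of `σ` at site `x`. -/
def spinC {V : Type*} (σ : V → Bool) (x : V) : ℝ := if σ x then 1 else -1

/-- Expectation of `F` under the (discrete, not necessarily normalized) measure `μ`. -/
def Emean {V : Type*} [Fintype V] [DecidableEq V] (μ F : (V → Bool) → ℝ) : ℝ :=
  ∑ σ, μ σ * F σ

/-- The Glauber generator with flipping rates `c`. -/
def gen {V : Type*} [Fintype V] [DecidableEq V] (c : V → (V → Bool) → ℝ)
    (F : (V → Bool) → ℝ) : (V → Bool) → ℝ :=
  fun σ => ∑ x, c x σ * (F (flipC σ x) - F σ)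

/-- The Dirichlet form `D(F) = -E_μ[F ⬝ 𝓛F]`. -/
def dirichlet {V : Type*} [Fintype V] [DecidableEq V] (μ : (V → Bool) → ℝ)
    (c : V → (V → Bool) → ℝ) (F : (V → Bool) → ℝ) : ℝ :=
  - Emean μ (fun σ => F σ * gen c F σ)

/-- Entropy `Ent_μ(F) = E_μ[F log F] − E_μ[F] log E_μ[F]` (note `0 log 0 = 0` in Lean). -/
noncomputable def entropy {V : Type*} [Fintype V] [DecidableEq V] (μ F : (V → Bool) → ℝ) : ℝ :=
  Emean μ (fun σ => F σ * Real.log (F σ)) - Emean μ F * Real.log (Emean μ F)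

/-- Covariance under `μ`. -/
def covar {V : Type*} [Fintype V] [DecidableEq V] (μ F G : (V → Bool) → ℝ) : ℝ :=
  Emean μ (fun σ => F σ * G σ) - Emean μ F * Emean μ G

/-- Variance under `μ`. -/
def varM {V : Type*} [Fintype V] [DecidableEq V] (μ F : (V → Bool) → ℝ) : ℝ :=
  covar μ F F

/-- The Glauber generator as a linear map. -/
def genL {V : Type*} [Fintype V] [DecidableEq V] (c : V → (V → Bool) → ℝ) :
    ((V → Bool) → ℝ) →ₗ[ℝ] ((V → Bool) → ℝ) where
  toFun := gen c
  map_add' F G := by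
    funext σ
    simp only [gen, Pi.add_apply, ← Finset.sum_add_distrib]
    exact Finset.sum_congr rfl fun x _ => by ring
  map_smul' a F := by
    funext σ
    simp only [gen, Pi.smul_apply, smul_eq_mul, RingHom.id_apply, Finset.mul_sum]
    exact Finset.sum_congr rfl fun x _ => by ring

/-- The Glauber generator as a continuous linear map. -/
noncomputable def genCLM {V : Type*} [Fintype V] [DecidableEq V] (c : V → (V → Bool) → ℝ) :
    ((V → Bool) → ℝ) →L[ℝ] ((V → Bool) → ℝ) :=
  LinearMap.toContinuousLinearMap (genL c)

/-- The Glauber semigroup `P_t = exp (t 𝓛)`. -/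
noncomputable def heatSG {V : Type*} [Fintype V] [DecidableEq V] (c : V → (V → Bool) → ℝ)
    (t : ℝ) : ((V → Bool) → ℝ) →L[ℝ] ((V → Bool) → ℝ) :=
  NormedSpace.exp (t • genCLM c)


section Aux

variable {V : Type*} [Fintype V] [DecidableEq V]

lemma flipC_flipC (σ : V → Bool) (x : V) : flipC (flipC σ x) x = σ := by
  funext y
  by_cases h : y = x
  · subst h; simp [flipC]
  · simp [flipC, Function.update_of_ne h]

lemma sum_flip (x : V) (f : (V → Bool) → ℝ) :
    ∑ σ : V → Bool, f (flipC σ x) = ∑ σ : V → Bool, f σ :=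
  Fintype.sum_bijective (fun σ => flipC σ x)
    (Function.Involutive.bijective fun σ => flipC_flipC σ x) _ _ (fun _ => rfl)

lemma sym_sum (μ : (V → Bool) → ℝ) (c : V → (V → Bool) → ℝ)
    (hrev : ∀ x σ, c x σ * μ σ = c x (flipC σ x) * μ (flipC σ x))
    (h : V → (V → Bool) → ℝ) :
    ∑ σ : V → Bool, ∑ x, μ σ * c x σ * h x σ
      = ∑ σ : V → Bool, ∑ x, μ σ * c x σ * h x (flipC σ x) := by
  rw [Finset.sum_comm]
  conv_rhs => rw [Finset.sum_comm]
  refine Finset.sum_congr rfl fun x _ => ?_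
  calc ∑ σ : V → Bool, μ σ * c x σ * h x σ
      = ∑ σ : V → Bool, μ (flipC σ x) * c x (flipC σ x) * h x (flipC σ x) :=
        (sum_flip x fun σ => μ σ * c x σ * h x σ).symm
    _ = ∑ σ : V → Bool, μ σ * c x σ * h x (flipC σ x) := by
        refine Finset.sum_congr rfl fun σ _ => ?_
        linear_combination (-(h x (flipC σ x))) * hrev x σ

lemma emean_gen_mul (μ : (V → Bool) → ℝ) (c : V → (V → Bool) → ℝ)
    (hrev : ∀ x σ, c x σ * μ σ = c x (flipC σ x) * μ (flipC σ x))
    (g G : (V → Bool) → ℝ) :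
    Emean μ (fun σ => gen c g σ * G σ)
      = -(1/2) * ∑ σ : V → Bool, ∑ x, μ σ * c x σ *
          ((g (flipC σ x) - g σ) * (G (flipC σ x) - G σ)) := by
  have h1 : Emean μ (fun σ => gen c g σ * G σ)
      = ∑ σ : V → Bool, ∑ x, μ σ * c x σ * ((g (flipC σ x) - g σ) * G σ) := by
    simp only [Emean, gen, Finset.sum_mul, Finset.mul_sum]
    exact Finset.sum_congr rfl fun σ _ => Finset.sum_congr rfl fun x _ => by ring
  have h2 := sym_sum μ c hrev (fun x σ => (g (flipC σ x) - g σ) * G σ)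
  simp only [flipC_flipC] at h2
  have h4 : (∑ σ : V → Bool, ∑ x, μ σ * c x σ * ((g (flipC σ x) - g σ) * G σ))
      + ∑ σ : V → Bool, ∑ x, μ σ * c x σ * ((g σ - g (flipC σ x)) * G (flipC σ x))
      = - ∑ σ : V → Bool, ∑ x, μ σ * c x σ *
          ((g (flipC σ x) - g σ) * (G (flipC σ x) - G σ)) := by
    rw [← Finset.sum_add_distrib, ← Finset.sum_neg_distrib]
    refine Finset.sum_congr rfl fun σ _ => ?_
    rw [← Finset.sum_add_distrib, ← Finset.sum_neg_distrib]
    exact Finset.sum_congr rfl fun x _ => by ring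
  linarith [h1, h2, h4]

lemma dirichlet_eq (μ : (V → Bool) → ℝ) (c : V → (V → Bool) → ℝ)
    (hrev : ∀ x σ, c x σ * μ σ = c x (flipC σ x) * μ (flipC σ x))
    (f : (V → Bool) → ℝ) :
    dirichlet μ c f = (1/2) * ∑ σ : V → Bool, ∑ x, μ σ * c x σ *
        ((f (flipC σ x) - f σ) * (f (flipC σ x) - f σ)) := by
  unfold dirichlet
  have h : (fun σ => f σ * gen c f σ) = (fun σ => gen c f σ * f σ) := by
    funext σ; ring
  rw [h, emean_gen_mul μ c hrev f f]; ring

lemma emean_gen_zero (μ : (V → Bool) → ℝ) (c : V → (V → Bool) → ℝ)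
    (hrev : ∀ x σ, c x σ * μ σ = c x (flipC σ x) * μ (flipC σ x))
    (h : (V → Bool) → ℝ) :
    Emean μ (gen c h) = 0 := by
  have h1 : Emean μ (gen c h)
      = ∑ σ : V → Bool, ∑ x, μ σ * c x σ * (h (flipC σ x) - h σ) := by
    simp only [Emean, gen, Finset.mul_sum]
    exact Finset.sum_congr rfl fun σ _ => Finset.sum_congr rfl fun x _ => by ring
  have h2 := sym_sum μ c hrev (fun x σ => h (flipC σ x) - h σ)
  simp only [flipC_flipC] at h2
  have h4 : (∑ σ : V → Bool, ∑ x, μ σ * c x σ * (h (flipC σ x) - h σ))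
      = - ∑ σ : V → Bool, ∑ x, μ σ * c x σ * (h σ - h (flipC σ x)) := by
    rw [← Finset.sum_neg_distrib]
    refine Finset.sum_congr rfl fun σ _ => ?_
    rw [← Finset.sum_neg_distrib]
    exact Finset.sum_congr rfl fun x _ => by ring
  linarith [h1, h2, h4]

lemma key_ineq_aux {a b : ℝ} (ha : 0 < a) (hb : 0 < b) (hba : b ≤ a) :
    (Real.sqrt a - Real.sqrt b) * (Real.sqrt a - Real.sqrt b)
      ≤ (a - b) * (Real.log a - Real.log b) := by
  set s := Real.sqrt a with hsdef
  set r := Real.sqrt b with hrdef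
  have hs : s ^ 2 = a := Real.sq_sqrt ha.le
  have hr : r ^ 2 = b := Real.sq_sqrt hb.le
  have hsa : 0 < s := Real.sqrt_pos.2 ha
  have hsb : 0 ≤ r := Real.sqrt_nonneg b
  have hab : 0 ≤ a - b := sub_nonneg.2 hba
  have hlog : Real.log b - Real.log a ≤ b / a - 1 := by
    have h := Real.log_le_sub_one_of_pos (div_pos hb ha)
    rwa [Real.log_div hb.ne' ha.ne'] at h
  have h1 : a - b ≤ a * (Real.log a - Real.log b) := by
    have h := mul_le_mul_of_nonneg_left hlog ha.le
    have e : a * (b / a - 1) = b - a := by field_simp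
    have e2 : a * (Real.log a - Real.log b) = -(a * (Real.log b - Real.log a)) := by ring
    rw [e2]
    linarith [h, e]
  have h2 : (a - b) * (a - b) ≤ (a - b) * (a * (Real.log a - Real.log b)) :=
    mul_le_mul_of_nonneg_left h1 hab
  have e1 : (a - b) * (a - b) = ((s - r) * (s - r)) * ((s + r) * (s + r)) := by
    rw [← hs, ← hr]; ring
  have e2 : a * ((s - r) * (s - r)) = ((s - r) * (s - r)) * (s * s) := by
    rw [← hs]; ring
  have h4 : s * s ≤ (s + r) * (s + r) := by nlinarith [mul_nonneg hsa.le hsb, mul_nonneg hsb hsb]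
  have h3 : a * ((s - r) * (s - r)) ≤ (a - b) * (a - b) := by
    rw [e1, e2]
    exact mul_le_mul_of_nonneg_left h4 (mul_self_nonneg _)
  have h5 : a * ((s - r) * (s - r)) ≤ a * ((a - b) * (Real.log a - Real.log b)) := by
    calc a * ((s - r) * (s - r)) ≤ (a - b) * (a * (Real.log a - Real.log b)) := le_trans h3 h2
      _ = a * ((a - b) * (Real.log a - Real.log b)) := by ring
  exact le_of_mul_le_mul_left h5 ha

lemma key_ineq {a b : ℝ} (ha : 0 < a) (hb : 0 < b) :
    (Real.sqrt a - Real.sqrt b) * (Real.sqrt a - Real.sqrt b)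
      ≤ (a - b) * (Real.log a - Real.log b) := by
  rcases le_total b a with h | h
  · exact key_ineq_aux ha hb h
  · have e1 : (Real.sqrt a - Real.sqrt b) * (Real.sqrt a - Real.sqrt b)
        = (Real.sqrt b - Real.sqrt a) * (Real.sqrt b - Real.sqrt a) := by ring
    have e2 : (a - b) * (Real.log a - Real.log b)
        = (b - a) * (Real.log b - Real.log a) := by ring
    rw [e1, e2]
    exact key_ineq_aux hb ha h

end Aux

section Pos

variable {V : Type*} [Fintype V] [DecidableEq V]

lemma genCLM_apply (c : V → (V → Bool) → ℝ) (h : (V → Bool) → ℝ) :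
    genCLM c h = gen c h := rfl

set_option maxHeartbeats 1000000 in
set_option synthInstance.maxHeartbeats 400000 in
lemma heat_pos (c : V → (V → Bool) → ℝ) (hcpos : ∀ x σ, 0 < c x σ)
    {t : ℝ} (ht : 0 ≤ t) (F : (V → Bool) → ℝ) (hF : ∀ σ, 0 < F σ) (σ : V → Bool) :
    0 < heatSG c t F σ := by
  classical
  set lam : ℝ := ∑ σ' : V → Bool, ∑ x, c x σ' with hlamdef
  set B : ((V → Bool) → ℝ) →L[ℝ] ((V → Bool) → ℝ) := genCLM c + lam • 1 with hB
  have hlam : ∀ σ' : V → Bool, (∑ x, c x σ') ≤ lam := fun σ' =>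
    Finset.single_le_sum (f := fun σ'' : V → Bool => ∑ x, c x σ'')
      (fun i _ => Finset.sum_nonneg fun x _ => (hcpos x i).le) (Finset.mem_univ σ')
  have hBnn : ∀ G : (V → Bool) → ℝ, (∀ τ, 0 ≤ G τ) → ∀ τ, 0 ≤ B G τ := by
    intro G hG τ
    have e : B G τ = ∑ x, c x τ * G (flipC τ x) + (lam - ∑ x, c x τ) * G τ := by
      rw [hB, ContinuousLinearMap.add_apply, ContinuousLinearMap.smul_apply,
        ContinuousLinearMap.one_apply, genCLM_apply]
      show gen c G τ + (lam • G) τ = _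
      rw [gen, Pi.smul_apply, smul_eq_mul]
      simp only [mul_sub]
      rw [Finset.sum_sub_distrib, ← Finset.sum_mul]
      ring
    rw [e]
    refine add_nonneg (Finset.sum_nonneg fun x _ => mul_nonneg (hcpos x τ).le (hG _)) ?_
    exact mul_nonneg (sub_nonneg.2 (hlam τ)) (hG τ)
  have hpow : ∀ n : ℕ, ∀ G : (V → Bool) → ℝ, (∀ τ, 0 ≤ G τ) → ∀ τ, 0 ≤ ((B ^ n) G) τ := by
    intro n
    induction n with
    | zero => intro G hG τ; simpa using hG τ
    | succ n ih =>
      intro G hG τ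
      rw [pow_succ, ContinuousLinearMap.mul_apply]
      exact ih _ (hBnn G hG) τ
  have hcomm : Commute ((-(t * lam)) • (1 : ((V → Bool) → ℝ) →L[ℝ] ((V → Bool) → ℝ))) (t • B) :=
    (Commute.one_left (t • B)).smul_left _
  have hsplit : t • genCLM c
      = (-(t * lam)) • (1 : ((V → Bool) → ℝ) →L[ℝ] ((V → Bool) → ℝ)) + t • B := by
    rw [hB]; module
  have hexpone : NormedSpace.exp ((-(t * lam)) • (1 : ((V → Bool) → ℝ) →L[ℝ] ((V → Bool) → ℝ)))
      = Real.exp (-(t * lam)) • (1 : ((V → Bool) → ℝ) →L[ℝ] ((V → Bool) → ℝ)) := by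
    rw [← Algebra.algebraMap_eq_smul_one, ← NormedSpace.algebraMap_exp_comm,
      Algebra.algebraMap_eq_smul_one, Real.exp_eq_exp_ℝ]
  have hexp : heatSG c t F σ = Real.exp (-(t * lam)) * (NormedSpace.exp (t • B) F σ) := by
    letI : NormedAlgebra ℚ (((V → Bool) → ℝ) →L[ℝ] ((V → Bool) → ℝ)) := .restrictScalars ℚ ℝ _
    rw [heatSG, hsplit, NormedSpace.exp_add_of_commute hcomm, hexpone,
      smul_mul_assoc, one_mul]
    rfl
  -- series lower bound
  have hsum : Summable (fun n : ℕ => ((n.factorial : ℝ))⁻¹ • (t • B) ^ n) :=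
    NormedSpace.expSeries_summable' (𝕂 := ℝ) (t • B)
  set Φ : (((V → Bool) → ℝ) →L[ℝ] ((V → Bool) → ℝ)) →L[ℝ] ℝ :=
    (ContinuousLinearMap.proj σ).comp ((ContinuousLinearMap.apply ℝ ((V → Bool) → ℝ)) F) with hΦdef
  have hΦ : ∀ M : ((V → Bool) → ℝ) →L[ℝ] ((V → Bool) → ℝ), Φ M = M F σ := fun M => rfl
  have heval : NormedSpace.exp (t • B) F σ
      = ∑' n : ℕ, ((n.factorial : ℝ))⁻¹ * (((t • B) ^ n) F σ) := by
    have h := Φ.map_tsum hsum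
    rw [NormedSpace.exp_eq_tsum ℝ, ← hΦ, h]
    refine tsum_congr fun n => ?_
    rw [map_smul, hΦ, smul_eq_mul]
  have hterm : ∀ n : ℕ, 0 ≤ ((n.factorial : ℝ))⁻¹ * (((t • B) ^ n) F σ) := by
    intro n
    have e : ((t • B) ^ n) F σ = t ^ n * ((B ^ n) F σ) := by
      rw [smul_pow, ContinuousLinearMap.smul_apply, Pi.smul_apply, smul_eq_mul]
    rw [e]
    exact mul_nonneg (inv_nonneg.2 (Nat.cast_nonneg _))
      (mul_nonneg (pow_nonneg ht n) (hpow n F (fun τ => (hF τ).le) σ))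
  have hsummable : Summable (fun n : ℕ => ((n.factorial : ℝ))⁻¹ * (((t • B) ^ n) F σ)) := by
    have h := hsum.map Φ.toLinearMap.toAddMonoidHom Φ.continuous
    refine h.congr fun n => ?_
    show Φ (((n.factorial : ℝ))⁻¹ • (t • B) ^ n) = _
    rw [map_smul, hΦ, smul_eq_mul]
  have hge : F σ ≤ NormedSpace.exp (t • B) F σ := by
    rw [heval]
    have h0 : ∑ n ∈ ({0} : Finset ℕ), ((n.factorial : ℝ))⁻¹ * (((t • B) ^ n) F σ) = F σ := by
      simp
    rw [← h0]
    exact Summable.sum_le_tsum _ (fun n _ => hterm n) hsummable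
  rw [hexp]
  exact mul_pos (Real.exp_pos _) (lt_of_lt_of_le (hF σ) hge)

end Pos

set_option maxHeartbeats 1000000 in
/-- **Entropy dissipation (de Bruijn) inequality** for reversible Glauber dynamics:
`E_μ[(𝓛g) log g] ≤ −D(√g)` for strictly positive `g`; consequently `t ↦ Ent_μ(P_t F)`
is differentiable with derivative `≤ −D(√(P_t F))` for `t ≥ 0` and strictly positive `F`. -/
theorem entropy_dissipation
    {V : Type*} [Fintype V] [DecidableEq V]
    (μ : (V → Bool) → ℝ) (hμpos : ∀ σ, 0 < μ σ) (hμ1 : ∑ σ, μ σ = 1)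
    (c : V → (V → Bool) → ℝ) (hcpos : ∀ x σ, 0 < c x σ)
    (hrev : ∀ x σ, c x σ * μ σ = c x (flipC σ x) * μ (flipC σ x)) :
    (∀ g : (V → Bool) → ℝ, (∀ σ, 0 < g σ) →
        Emean μ (fun σ => gen c g σ * Real.log (g σ))
          ≤ - dirichlet μ c (fun σ => Real.sqrt (g σ))) ∧
      (∀ F : (V → Bool) → ℝ, (∀ σ, 0 < F σ) → ∀ t : ℝ, 0 ≤ t →
        ∃ e : ℝ, HasDerivAt (fun s => entropy μ (heatSG c s F)) e t ∧
          e ≤ - dirichlet μ c (fun σ => Real.sqrt (heatSG c t F σ))) := by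
  classical
  have part1 : ∀ g : (V → Bool) → ℝ, (∀ σ, 0 < g σ) →
      Emean μ (fun σ => gen c g σ * Real.log (g σ))
        ≤ - dirichlet μ c (fun σ => Real.sqrt (g σ)) := by
    intro g hg
    rw [emean_gen_mul μ c hrev g (fun σ => Real.log (g σ)),
      dirichlet_eq μ c hrev (fun σ => Real.sqrt (g σ))]
    have hle : (∑ σ : V → Bool, ∑ x, μ σ * c x σ *
          ((Real.sqrt (g (flipC σ x)) - Real.sqrt (g σ))
            * (Real.sqrt (g (flipC σ x)) - Real.sqrt (g σ))))
        ≤ ∑ σ : V → Bool, ∑ x, μ σ * c x σ *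
          ((g (flipC σ x) - g σ) * (Real.log (g (flipC σ x)) - Real.log (g σ))) := by
      refine Finset.sum_le_sum fun σ _ => Finset.sum_le_sum fun x _ => ?_
      exact mul_le_mul_of_nonneg_left (key_ineq (hg _) (hg _))
        (mul_nonneg (hμpos σ).le (hcpos x σ).le)
    linarith
  refine ⟨part1, ?_⟩
  intro F hF t ht
  have hgpos : ∀ τ, 0 < heatSG c t F τ := fun τ => heat_pos c hcpos ht F hF τ
  set g : (V → Bool) → ℝ := heatSG c t F with hgdef
  -- coordinate derivatives
  have hexp := hasDerivAt_exp_smul_const' (𝕂 := ℝ) (genCLM c) t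
  have hDH : ∀ τ : V → Bool, HasDerivAt (fun s => heatSG c s F τ) (gen c g τ) t := by
    intro τ
    have h2 := hexp.clm_apply (hasDerivAt_const t F)
    have h3 := (ContinuousLinearMap.proj (R := ℝ) (φ := fun _ : V → Bool => ℝ)
      τ).hasFDerivAt.comp_hasDerivAt t h2
    convert h3 using 1
    iterate 3 rfl
    show gen c g τ = _
    simp only [map_zero, add_zero, ContinuousLinearMap.mul_apply]
    rfl
  set D1 : ℝ := ∑ τ : V → Bool, μ τ * ((Real.log (g τ) + 1) * gen c g τ) with hD1
  have hterm1 : HasDerivAt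
      (fun s => ∑ τ : V → Bool, μ τ * (heatSG c s F τ * Real.log (heatSG c s F τ))) D1 t := by
    rw [hD1]
    refine HasDerivAt.fun_sum fun τ _ => ?_
    have hψ : HasDerivAt (fun y : ℝ => y * Real.log y) (Real.log (g τ) + 1) (g τ) := by
      have h := (hasDerivAt_id (g τ)).mul (Real.hasDerivAt_log (hgpos τ).ne')
      convert h using 1
      iterate 3 rfl
      field_simp
      exact congrArg (Real.log (g τ) + ·) (div_self (hgpos τ).ne').symm
    exact (hψ.comp t (hDH τ)).const_mul (μ τ)
  have hm : HasDerivAt (fun s => ∑ τ : V → Bool, μ τ * heatSG c s F τ) 0 t := by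
    have h := HasDerivAt.fun_sum (fun τ (_ : τ ∈ Finset.univ) => (hDH τ).const_mul (μ τ))
    have hz : ∑ τ : V → Bool, μ τ * gen c g τ = 0 := emean_gen_zero μ c hrev g
    rw [← hz]
    exact h
  have hmpos : 0 < ∑ τ : V → Bool, μ τ * heatSG c t F τ :=
    Finset.sum_pos (fun τ _ => mul_pos (hμpos τ) (hgpos τ)) Finset.univ_nonempty
  have hterm2 : HasDerivAt (fun s => (∑ τ : V → Bool, μ τ * heatSG c s F τ)
      * Real.log (∑ τ : V → Bool, μ τ * heatSG c s F τ)) 0 t := by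
    have hlog := (Real.hasDerivAt_log hmpos.ne').comp t hm
    have h := hm.mul hlog
    convert h using 1
    iterate 3 rfl
    simp
  have hE : HasDerivAt (fun s => entropy μ (heatSG c s F)) (D1 - 0) t := by
    have h := hterm1.sub hterm2
    exact h
  refine ⟨D1 - 0, hE, ?_⟩
  rw [sub_zero]
  have hz : Emean μ (gen c g) = 0 := emean_gen_zero μ c hrev g
  have hsplitD : D1 = Emean μ (fun σ => gen c g σ * Real.log (g σ)) + Emean μ (gen c g) := by
    rw [hD1]
    unfold Emean
    rw [← Finset.sum_add_distrib]
    exact Finset.sum_congr rfl fun τ _ => by ring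
  rw [hsplitD, hz, add_zero]
  exact part1 g hgpos
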